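/- Let τ > 0 and suppose 1ᵀ·A·1 > 0. Let P := H·(HᵀH)^{−1}·Hᵀ be the orthogonal projection onto the column space of H. Then the column space of H is an invariant subspace of both A and (I_n − τ·1·1ᵀ/n)·A, and Tr(P·A·P) − Tr(P·(I_n − τ·1·1ᵀ/n)·A·P) = τ·(1ᵀ·A·1)/n > 0; i.e., the sum of the eigenvalues of the centered operator on this invariant subspace is strictly smaller than the sum of the corresponding (structural) eigenvalues of A. -/
import Mathlib


open Matrix

/-- Let `A` be symmetric nonnegative, `H` the indicator matrix of an
equitable partition (`A·H = H·Aπ`), `τ > 0` and `1ᵀ·A·1 > 0`. With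
`P := H·(HᵀH)⁻¹·Hᵀ` the orthogonal projection onto `col(H)`, the column space of `H` is
invariant under both `A` and the centered operator `(I − τ·11ᵀ/n)·A`, and
`Tr(P·A·P) − Tr(P·(I − τ·11ᵀ/n)·A·P) = τ·(1ᵀ·A·1)/n > 0`. -/
theorem stmt_16 {n m : ℕ}
    (A : Matrix (Fin n) (Fin n) ℝ) (hA : A.IsSymm) (hAnn : ∀ i j, 0 ≤ A i j)
    (H : Matrix (Fin n) (Fin m) ℝ)
    (h01 : ∀ i j, H i j = 0 ∨ H i j = 1)
    (hrow : ∀ i, ∑ j, H i j = 1)           -- each row has exactly one entry `1`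
    (hcls : ∀ j, ∃ i, H i j = 1)           -- each class is nonempty
    (Aπ : Matrix (Fin m) (Fin m) ℝ)
    (hAπ : Aπ = (Hᵀ * H)⁻¹ * Hᵀ * A * H)
    (hEP : A * H = H * Aπ)                  -- equitable partition
    (τ : ℝ) (hτ : 0 < τ)
    (hA1 : 0 < (fun _ => (1 : ℝ)) ⬝ᵥ (A *ᵥ fun _ => (1 : ℝ)))
    (P : Matrix (Fin n) (Fin n) ℝ)
    (hP : P = H * (Hᵀ * H)⁻¹ * Hᵀ)
    (Mc : Matrix (Fin n) (Fin n) ℝ)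
    (hMc : Mc = ((1 : Matrix (Fin n) (Fin n) ℝ) - (τ / n) • Matrix.of fun _ _ => (1 : ℝ)) * A) :
    (∀ x : Fin m → ℝ, ∃ y : Fin m → ℝ, A *ᵥ (H *ᵥ x) = H *ᵥ y) ∧
    (∀ x : Fin m → ℝ, ∃ y : Fin m → ℝ, Mc *ᵥ (H *ᵥ x) = H *ᵥ y) ∧
    Matrix.trace (P * A * P) - Matrix.trace (P * Mc * P)
      = τ * ((fun _ => (1 : ℝ)) ⬝ᵥ (A *ᵥ fun _ => (1 : ℝ))) / n ∧
    0 < τ * ((fun _ => (1 : ℝ)) ⬝ᵥ (A *ᵥ fun _ => (1 : ℝ))) / n := by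
  have hHnn : ∀ i j, (0:ℝ) ≤ H i j := by
    intro i j; rcases h01 i j with h | h <;> simp [h]
  -- `HᵀH` is diagonal with positive diagonal entries
  have hdiag : Hᵀ * H = Matrix.diagonal (fun j => ∑ i, H i j) := by
    ext j k
    simp only [Matrix.mul_apply, Matrix.transpose_apply, Matrix.diagonal_apply]
    by_cases hjk : j = k
    · subst hjk; simp only [if_pos rfl]
      refine Finset.sum_congr rfl fun i _ => ?_
      rcases h01 i j with h | h <;> simp [h]
    · simp only [if_neg hjk]
      refine Finset.sum_eq_zero fun i _ => ?_
      rcases h01 i j with h | h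
      · simp [h]
      rcases h01 i k with h' | h'
      · simp [h']
      · exfalso
        have hle : ∑ l ∈ ({j, k} : Finset (Fin m)), H i l ≤ ∑ l, H i l :=
          Finset.sum_le_sum_of_subset_of_nonneg (Finset.subset_univ _)
            (fun l _ _ => hHnn i l)
        rw [Finset.sum_pair hjk, h, h', hrow i] at hle
        linarith
  have hdpos : ∀ j, (0:ℝ) < ∑ i, H i j := by
    intro j
    obtain ⟨i0, hi0⟩ := hcls j
    exact Finset.sum_pos' (fun i _ => hHnn i j) ⟨i0, Finset.mem_univ _, by rw [hi0]; norm_num⟩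
  have hu : IsUnit (Hᵀ * H).det := by
    rw [hdiag, Matrix.det_diagonal]
    exact (Finset.prod_pos (fun j _ => hdpos j)).ne'.isUnit
  have hInv : (Hᵀ * H)⁻¹ * (Hᵀ * H) = 1 := Matrix.nonsing_inv_mul _ hu
  set Q := (Hᵀ * H)⁻¹ * Hᵀ with hQ
  have hPQ : P = H * Q := by rw [hP, Matrix.mul_assoc]
  have hQH : Q * H = 1 := by
    rw [hQ, Matrix.mul_assoc]
    simpa [Matrix.mul_assoc] using hInv
  have hPH : P * H = H := by rw [hPQ, Matrix.mul_assoc, hQH, Matrix.mul_one]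
  have hPP : P * P = P := by
    rw [hPQ, ← Matrix.mul_assoc, Matrix.mul_assoc H Q H, hQH, Matrix.mul_one]
  have hone : (H *ᵥ fun _ => (1:ℝ)) = fun _ => (1:ℝ) := by
    ext i; simp [Matrix.mulVec, dotProduct, hrow i]
  set J : Matrix (Fin n) (Fin n) ℝ := Matrix.of fun _ _ => (1:ℝ) with hJ
  set S : Matrix (Fin m) (Fin m) ℝ := Matrix.of fun _ k => ∑ l, (A * H) l k with hS
  have hJAH : J * (A * H) = H * S := by
    ext i k
    simp only [hJ, hS, Matrix.mul_apply, Matrix.of_apply, one_mul]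
    rw [← Finset.sum_mul, hrow i, one_mul]
  have hMcH : Mc * H = H * (Aπ - (τ / n) • S) := by
    rw [hMc, Matrix.sub_mul, Matrix.one_mul, Matrix.smul_mul, Matrix.sub_mul,
      Matrix.smul_mul, Matrix.mul_assoc, hJAH, Matrix.mul_sub, Matrix.mul_smul, hEP]
  have hP1 : P *ᵥ (fun _ => (1:ℝ)) = fun _ => 1 := by
    rw [← hone, Matrix.mulVec_mulVec, hPH]
  have hPJ : P * J = J := by
    ext i k
    simp only [hJ, Matrix.mul_apply, Matrix.of_apply, mul_one]
    simpa [Matrix.mulVec, dotProduct] using congrFun hP1 i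
  have hsub : P * A * P - P * Mc * P = (τ / n) • (P * (J * A) * P) := by
    rw [hMc, Matrix.sub_mul, Matrix.one_mul, Matrix.smul_mul, Matrix.mul_sub,
      Matrix.mul_smul, Matrix.sub_mul, Matrix.smul_mul]
    exact (sub_sub_cancel _ _)
  have htr : Matrix.trace (P * (J * A) * P) = ∑ i, ∑ j, A i j := by
    rw [Matrix.trace_mul_comm, ← Matrix.mul_assoc, hPP, ← Matrix.mul_assoc, hPJ]
    simp only [Matrix.trace, Matrix.diag, Matrix.mul_apply, hJ, Matrix.of_apply, one_mul]
    exact Finset.sum_comm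
  have hdot : (fun _ => (1:ℝ)) ⬝ᵥ (A *ᵥ fun _ => (1:ℝ)) = ∑ i, ∑ j, A i j := by
    simp [dotProduct, Matrix.mulVec]
  have hn : 0 < n := by
    rcases Nat.eq_zero_or_pos n with h | h
    · subst h; simp [dotProduct] at hA1
    · exact h
  have hpos : 0 < τ * ((fun _ => (1 : ℝ)) ⬝ᵥ (A *ᵥ fun _ => (1 : ℝ))) / n :=
    div_pos (mul_pos hτ hA1) (by exact_mod_cast hn)
  refine ⟨?_, ?_, ?_, hpos⟩
  · intro x
    exact ⟨Aπ *ᵥ x, by rw [Matrix.mulVec_mulVec, hEP, ← Matrix.mulVec_mulVec]⟩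
  · intro x
    exact ⟨(Aπ - (τ / n) • S) *ᵥ x,
      by rw [Matrix.mulVec_mulVec, hMcH, ← Matrix.mulVec_mulVec]⟩
  · rw [← Matrix.trace_sub, hsub, Matrix.trace_smul, htr, hdot]
    simp only [smul_eq_mul]
    ring
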